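/- Let A be a finite set and X ⊆ A^ℤ a nonempty closed shift-invariant set that is minimal (every shift-orbit closure equals X). Let f : X → ℝ be locally constant, i.e., there is N ∈ ℕ such that f(x) = f(y) whenever x_k = y_k for all |k| ≤ N. For x ∈ X define V_x(n) := f(S^n x). Then for all x, y ∈ X, any bounded linear operators H_x and H_y on ℓ²(ℤ,ℂ) satisfying (H_x ψ)(n) = ψ(n+1) + ψ(n−1) + V_x(n)ψ(n) and (H_y ψ)(n) = ψ(n+1) + ψ(n−1) + V_y(n)ψ(n) have equal spectra: spectrum(H_x) = spectrum(H_y). -/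

import Mathlib

open scoped ComplexConjugate ENNReal NNReal

noncomputable section Stmt16Aux

set_option maxHeartbeats 1000000

local notation "ℓ2" => lp (fun _ : ℤ => ℂ) 2

lemma stmt16_memlp_translate (m : ℤ) (g : ℤ → ℂ) (hg : Memℓp g 2) :
    Memℓp (fun n => g (n + m)) 2 := by
  have h2 : (0:ℝ) < (2 : ℝ≥0∞).toReal := by norm_num
  rw [memℓp_gen_iff h2] at hg ⊢
  exact ((Equiv.addRight m).summable_iff
    (f := fun n => ‖g n‖ ^ (2:ℝ≥0∞).toReal)).2 hg

/-- translation of an `ℓ²` element -/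
def stmt16_transl (m : ℤ) (g : ℓ2) : ℓ2 :=
  ⟨fun n => (g : ℤ → ℂ) (n + m), stmt16_memlp_translate m g (lp.memℓp g)⟩

@[simp] lemma stmt16_transl_apply (m : ℤ) (g : ℓ2) (n : ℤ) :
    (stmt16_transl m g : ℤ → ℂ) n = (g : ℤ → ℂ) (n + m) := rfl

lemma stmt16_norm_translate (m : ℤ) (g h : ℓ2)
    (hh : ∀ n, (h : ℤ → ℂ) n = (g : ℤ → ℂ) (n + m)) : ‖h‖ = ‖g‖ := by
  have h2 : (0:ℝ) < (2 : ℝ≥0∞).toReal := by norm_num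
  rw [lp.norm_eq_tsum_rpow h2, lp.norm_eq_tsum_rpow h2]
  congr 1
  calc ∑' n, ‖(h : ℤ → ℂ) n‖ ^ (2:ℝ≥0∞).toReal
      = ∑' n, ‖(g : ℤ → ℂ) (n + m)‖ ^ (2:ℝ≥0∞).toReal := by
        exact tsum_congr fun n => by rw [hh]
    _ = _ := (Equiv.addRight m).tsum_eq (fun n => ‖(g : ℤ → ℂ) n‖ ^ (2:ℝ≥0∞).toReal)

lemma stmt16_summable_conj_mul' (a b : ℓ2) :
    Summable fun n : ℤ => (starRingEnd ℂ) ((a : ℤ → ℂ) n) * (b : ℤ → ℂ) n := by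
  have := lp.summable_inner (𝕜 := ℂ) a b
  simpa [RCLike.inner_apply, mul_comm] using this

lemma stmt16_conj_exp : (2 : ℝ≥0∞).toReal.HolderConjugate (2 : ℝ≥0∞).toReal := by
  convert Real.HolderConjugate.two_two <;> simp
lemma stmt16_schrodinger_symm (V : ℤ → ℝ) (H : ℓ2 →L[ℂ] ℓ2)
    (hH : ∀ ψ : ℓ2, ∀ n : ℤ, (H ψ : ℤ → ℂ) n
      = (ψ : ℤ → ℂ) (n+1) + (ψ : ℤ → ℂ) (n-1) + (V n : ℂ) * (ψ : ℤ → ℂ) n)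
    (ψ φ : ℓ2) :
    (inner ℂ (H ψ) φ : ℂ) = inner ℂ ψ (H φ) := by
  -- boundedness of the potential
  have hV : ∀ n : ℤ, |V n| ≤ ‖H‖ := by
    intro n
    set ε : ℓ2 := lp.single 2 n (1:ℂ) with hε
    have h1 : ((H ε) : ℤ → ℂ) n = (V n : ℂ) := by
      rw [hH]
      rw [hε, lp.single_apply_ne (E := fun _ : ℤ => ℂ) 2 n 1 (by omega : n + 1 ≠ n),
          lp.single_apply_ne (E := fun _ : ℤ => ℂ) 2 n 1 (by omega : n - 1 ≠ n),
          lp.single_apply_self]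
      ring
    have h2 : |V n| = ‖((H ε) : ℤ → ℂ) n‖ := by
      rw [h1, Complex.norm_real, Real.norm_eq_abs]
    have h3 : ‖ε‖ = 1 := by
      rw [hε, lp.norm_single (E := fun _ : ℤ => ℂ) (p := 2) (by norm_num) n (1:ℂ)]
      simp
    rw [h2]
    calc ‖((H ε) : ℤ → ℂ) n‖
        ≤ ‖H ε‖ := lp.norm_apply_le_norm two_ne_zero (H ε) n
      _ ≤ ‖H‖ * ‖ε‖ := H.le_opNorm ε
      _ = ‖H‖ := by rw [h3, mul_one]
  have hVs : ∀ a b : ℓ2, Summable fun n : ℤ =>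
      (V n : ℂ) * ((starRingEnd ℂ) ((a : ℤ → ℂ) n) * (b : ℤ → ℂ) n) := by
    intro a b
    apply Summable.of_norm_bounded
      (g := fun n => ‖H‖ * (‖(a : ℤ → ℂ) n‖ * ‖(b : ℤ → ℂ) n‖))
      ((lp.summable_mul stmt16_conj_exp a b).mul_left ‖H‖)
    intro n
    rw [norm_mul, norm_mul, RCLike.norm_conj, Complex.norm_real, Real.norm_eq_abs]
    have h1 : 0 ≤ ‖(a : ℤ → ℂ) n‖ * ‖(b : ℤ → ℂ) n‖ := by positivity
    exact mul_le_mul_of_nonneg_right (hV n) h1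
  have e1 : ∀ n : ℤ, n + (-1:ℤ) = n - 1 := fun n => by ring
  have S1 : Summable fun n : ℤ => (starRingEnd ℂ) ((ψ:ℤ→ℂ) (n+1)) * (φ:ℤ→ℂ) n :=
    stmt16_summable_conj_mul' (stmt16_transl 1 ψ) φ
  have S2 : Summable fun n : ℤ => (starRingEnd ℂ) ((ψ:ℤ→ℂ) (n-1)) * (φ:ℤ→ℂ) n := by
    simpa only [stmt16_transl_apply, e1] using
      stmt16_summable_conj_mul' (stmt16_transl (-1) ψ) φ
  have T1 : Summable fun n : ℤ => (starRingEnd ℂ) ((ψ:ℤ→ℂ) n) * (φ:ℤ→ℂ) (n+1) :=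
    stmt16_summable_conj_mul' ψ (stmt16_transl 1 φ)
  have T2 : Summable fun n : ℤ => (starRingEnd ℂ) ((ψ:ℤ→ℂ) n) * (φ:ℤ→ℂ) (n-1) := by
    simpa only [stmt16_transl_apply, e1] using
      stmt16_summable_conj_mul' ψ (stmt16_transl (-1) φ)
  have S3 := hVs ψ φ
  have hL : (inner ℂ (H ψ) φ : ℂ)
      = (∑' n : ℤ, (starRingEnd ℂ) ((ψ:ℤ→ℂ) (n+1)) * (φ:ℤ→ℂ) n)
      + (∑' n : ℤ, (starRingEnd ℂ) ((ψ:ℤ→ℂ) (n-1)) * (φ:ℤ→ℂ) n)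
      + (∑' n : ℤ, (V n : ℂ) * ((starRingEnd ℂ) ((ψ:ℤ→ℂ) n) * (φ:ℤ→ℂ) n)) := by
    calc (inner ℂ (H ψ) φ : ℂ)
        = ∑' n : ℤ, (inner ℂ ((H ψ : ℤ → ℂ) n) ((φ : ℤ → ℂ) n) : ℂ) :=
          lp.inner_eq_tsum (H ψ) φ
      _ = ∑' n : ℤ, ((starRingEnd ℂ) ((ψ:ℤ→ℂ) (n+1)) * (φ:ℤ→ℂ) n
            + (starRingEnd ℂ) ((ψ:ℤ→ℂ) (n-1)) * (φ:ℤ→ℂ) n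
            + (V n : ℂ) * ((starRingEnd ℂ) ((ψ:ℤ→ℂ) n) * (φ:ℤ→ℂ) n)) :=
          tsum_congr fun n => by
            rw [RCLike.inner_apply, hH]
            simp only [map_add, map_mul, Complex.conj_ofReal]
            ring
      _ = _ := by rw [Summable.tsum_add (S1.add S2) S3, Summable.tsum_add S1 S2]
  have hR : (inner ℂ ψ (H φ) : ℂ)
      = (∑' n : ℤ, (starRingEnd ℂ) ((ψ:ℤ→ℂ) n) * (φ:ℤ→ℂ) (n+1))
      + (∑' n : ℤ, (starRingEnd ℂ) ((ψ:ℤ→ℂ) n) * (φ:ℤ→ℂ) (n-1))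
      + (∑' n : ℤ, (V n : ℂ) * ((starRingEnd ℂ) ((ψ:ℤ→ℂ) n) * (φ:ℤ→ℂ) n)) := by
    calc (inner ℂ ψ (H φ) : ℂ)
        = ∑' n : ℤ, (inner ℂ ((ψ : ℤ → ℂ) n) ((H φ : ℤ → ℂ) n) : ℂ) :=
          lp.inner_eq_tsum ψ (H φ)
      _ = ∑' n : ℤ, ((starRingEnd ℂ) ((ψ:ℤ→ℂ) n) * (φ:ℤ→ℂ) (n+1)
            + (starRingEnd ℂ) ((ψ:ℤ→ℂ) n) * (φ:ℤ→ℂ) (n-1)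
            + (V n : ℂ) * ((starRingEnd ℂ) ((ψ:ℤ→ℂ) n) * (φ:ℤ→ℂ) n)) :=
          tsum_congr fun n => by
            rw [RCLike.inner_apply, hH]
            ring
      _ = _ := by rw [Summable.tsum_add (T1.add T2) S3, Summable.tsum_add T1 T2]
  have E1 : (∑' n : ℤ, (starRingEnd ℂ) ((ψ:ℤ→ℂ) (n+1)) * (φ:ℤ→ℂ) n)
      = ∑' n : ℤ, (starRingEnd ℂ) ((ψ:ℤ→ℂ) n) * (φ:ℤ→ℂ) (n-1) := by
    have := (Equiv.addRight (1:ℤ)).tsum_eq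
      (f := fun n : ℤ => (starRingEnd ℂ) ((ψ:ℤ→ℂ) n) * (φ:ℤ→ℂ) (n-1))
    simpa only [Equiv.coe_addRight, add_sub_cancel_right] using this
  have E2 : (∑' n : ℤ, (starRingEnd ℂ) ((ψ:ℤ→ℂ) (n-1)) * (φ:ℤ→ℂ) n)
      = ∑' n : ℤ, (starRingEnd ℂ) ((ψ:ℤ→ℂ) n) * (φ:ℤ→ℂ) (n+1) := by
    have := (Equiv.subRight (1:ℤ)).tsum_eq
      (f := fun n : ℤ => (starRingEnd ℂ) ((ψ:ℤ→ℂ) n) * (φ:ℤ→ℂ) (n+1))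
    simpa only [Equiv.subRight_apply, sub_add_cancel] using this
  rw [hL, hR, E1, E2]
  ring

/-- The shift of a two-sided sequence by `m` (that is, `S^m`). -/
def shiftBy {A : Type*} (m : ℤ) (x : ℤ → A) : ℤ → A := fun n => x (n + m)

lemma stmt16_spec_subset {A : Type*} [Fintype A] [TopologicalSpace A] [DiscreteTopology A]
    (X : Set (ℤ → A))
    (hXinv : ∀ x ∈ X, ∀ m : ℤ, shiftBy m x ∈ X)
    (hmin : ∀ x ∈ X, closure {y | ∃ m : ℤ, y = shiftBy m x} = X)
    (f : (ℤ → A) → ℝ)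
    (hf : ∃ N : ℕ, ∀ x ∈ X, ∀ y ∈ X,
      (∀ k : ℤ, |k| ≤ (N : ℤ) → x k = y k) → f x = f y)
    (x y : ℤ → A) (hx : x ∈ X) (hy : y ∈ X)
    (Hx Hy : ℓ2 →L[ℂ] ℓ2)
    (hHx : ∀ ψ : ℓ2, ∀ n : ℤ,
      (Hx ψ : ∀ _ : ℤ, ℂ) n =
        (ψ : ∀ _ : ℤ, ℂ) (n + 1) + (ψ : ∀ _ : ℤ, ℂ) (n - 1) +
          (f (shiftBy n x) : ℂ) * (ψ : ∀ _ : ℤ, ℂ) n)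
    (hHy : ∀ ψ : ℓ2, ∀ n : ℤ,
      (Hy ψ : ∀ _ : ℤ, ℂ) n =
        (ψ : ∀ _ : ℤ, ℂ) (n + 1) + (ψ : ∀ _ : ℤ, ℂ) (n - 1) +
          (f (shiftBy n y) : ℂ) * (ψ : ∀ _ : ℤ, ℂ) n) :
    spectrum ℂ Hx ⊆ spectrum ℂ Hy := by
  intro lam hlam
  by_contra hlam'
  have hUy : IsUnit (algebraMap ℂ (ℓ2 →L[ℂ] ℓ2) lam - Hy) := spectrum.notMem_iff.mp hlam'
  set Ty : ℓ2 →L[ℂ] ℓ2 := algebraMap ℂ (ℓ2 →L[ℂ] ℓ2) lam - Hy with hTy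
  set Tx : ℓ2 →L[ℂ] ℓ2 := algebraMap ℂ (ℓ2 →L[ℂ] ℓ2) lam - Hx with hTx
  have hTxapp : ∀ φ : ℓ2, Tx φ = lam • φ - Hx φ := by
    intro φ
    rw [hTx]
    simp [Algebra.algebraMap_eq_smul_one, ContinuousLinearMap.sub_apply]
  have hTyapp : ∀ φ : ℓ2, Ty φ = lam • φ - Hy φ := by
    intro φ
    rw [hTy]
    simp [Algebra.algebraMap_eq_smul_one, ContinuousLinearMap.sub_apply]
  have hTxc : ∀ (φ : ℓ2) (n : ℤ), (Tx φ : ℤ → ℂ) n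
      = lam * (φ : ℤ → ℂ) n - ((φ : ℤ → ℂ) (n+1) + (φ : ℤ → ℂ) (n-1)
          + (f (shiftBy n x) : ℂ) * (φ : ℤ → ℂ) n) := by
    intro φ n
    rw [hTxapp φ]
    rw [lp.coeFn_sub, Pi.sub_apply, lp.coeFn_smul, Pi.smul_apply, smul_eq_mul, hHx]
  have hTyc : ∀ (φ : ℓ2) (n : ℤ), (Ty φ : ℤ → ℂ) n
      = lam * (φ : ℤ → ℂ) n - ((φ : ℤ → ℂ) (n+1) + (φ : ℤ → ℂ) (n-1)
          + (f (shiftBy n y) : ℂ) * (φ : ℤ → ℂ) n) := by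
    intro φ n
    rw [hTyapp φ]
    rw [lp.coeFn_sub, Pi.sub_apply, lp.coeFn_smul, Pi.smul_apply, smul_eq_mul, hHy]
  -- lower bound for `Ty`
  set Bop : ℓ2 →L[ℂ] ℓ2 := ((hUy.unit⁻¹ : (ℓ2 →L[ℂ] ℓ2)ˣ) : ℓ2 →L[ℂ] ℓ2) with hBop
  set c : ℝ := (‖Bop‖ + 1)⁻¹ with hc
  have hBne : (0:ℝ) < ‖Bop‖ + 1 := by positivity
  have hcpos : 0 < c := by rw [hc]; positivity
  have hBT : ∀ φ : ℓ2, Bop (Ty φ) = φ := by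
    intro φ
    have h1 : Bop * Ty = 1 := by
      rw [hBop]
      exact hUy.unit.inv_mul
    calc Bop (Ty φ) = (Bop * Ty) φ := rfl
      _ = φ := by rw [h1]; rfl
  have hlowy : ∀ φ : ℓ2, c * ‖φ‖ ≤ ‖Ty φ‖ := by
    intro φ
    have h2 : ‖φ‖ ≤ (‖Bop‖ + 1) * ‖Ty φ‖ := by
      calc ‖φ‖ = ‖Bop (Ty φ)‖ := by rw [hBT]
        _ ≤ ‖Bop‖ * ‖Ty φ‖ := Bop.le_opNorm _
        _ ≤ (‖Bop‖ + 1) * ‖Ty φ‖ := by nlinarith [norm_nonneg (Ty φ)]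
    calc c * ‖φ‖ ≤ c * ((‖Bop‖ + 1) * ‖Ty φ‖) := mul_le_mul_of_nonneg_left h2 hcpos.le
      _ = ‖Ty φ‖ := by rw [hc, inv_mul_cancel_left₀ hBne.ne']
  obtain ⟨N, hN⟩ := hf
  -- transfer of the lower bound to finitely supported vectors
  have key : ∀ (s : Finset ℤ) (ψ : ℓ2), (∀ j : ℤ, j ∉ s → (ψ : ℤ → ℂ) j = 0) →
      c * ‖ψ‖ ≤ ‖Tx ψ‖ := by
    intro s ψ hs
    set B : ℤ := ((s.sup fun i => i.natAbs : ℕ) : ℤ) with hB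
    have hBmem : ∀ j ∈ s, |j| ≤ B := by
      intro j hj
      have h1 : j.natAbs ≤ s.sup (fun i => i.natAbs) := Finset.le_sup hj
      rw [Int.abs_eq_natAbs, hB]
      exact_mod_cast h1
    set W : ℤ := B + N with hW
    have hxcl : x ∈ closure {z | ∃ m : ℤ, z = shiftBy m y} := by
      rw [hmin y hy]; exact hx
    set U : Set (ℤ → A) := {z | ∀ k ∈ Finset.Icc (-W) W, z k = x k} with hU
    have hUopen : IsOpen U := by
      have h1 : U = ⋂ k ∈ Finset.Icc (-W) W, (fun z : ℤ → A => z k) ⁻¹' {x k} := by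
        ext z; simp [hU]
      rw [h1]
      exact isOpen_biInter_finset fun k _ =>
        (continuous_apply k).isOpen_preimage _ (isOpen_discrete _)
    have hxU : x ∈ U := by
      rw [hU]; intro k _; rfl
    obtain ⟨z, hzU, hzorb⟩ := mem_closure_iff.mp hxcl U hUopen hxU
    obtain ⟨m, rfl⟩ := hzorb
    have hm : ∀ k : ℤ, |k| ≤ W → shiftBy m y k = x k := by
      intro k hk
      exact hzU k (Finset.mem_Icc.mpr (abs_le.mp hk))
    have hmatch : ∀ j : ℤ, (ψ : ℤ → ℂ) j ≠ 0 →
        f (shiftBy j x) = f (shiftBy (j + m) y) := by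
      intro j hj
      have hjs : j ∈ s := by by_contra hcc; exact hj (hs j hcc)
      have hjB : |j| ≤ B := hBmem j hjs
      refine hN (shiftBy j x) (hXinv x hx j) (shiftBy (j + m) y) (hXinv y hy (j + m)) ?_
      intro k hk
      have h1 := abs_le.mp hk
      have h2 := abs_le.mp hjB
      have habs : |k + j| ≤ W := by
        rw [hW]
        exact abs_le.mpr ⟨by omega, by omega⟩
      have h3 := hm (k + j) habs
      simp only [shiftBy] at h3 ⊢
      rw [← h3]
      congr 1
      ring
    set ψ' : ℓ2 := stmt16_transl (-m) ψ with hψ'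
    have hcoord : ∀ n : ℤ, (Ty ψ' : ℤ → ℂ) n = (Tx ψ : ℤ → ℂ) (n + -m) := by
      intro n
      rw [hTyc, hTxc]
      have c1 : (ψ' : ℤ → ℂ) n = (ψ : ℤ → ℂ) (n + -m) := rfl
      have c2 : (ψ' : ℤ → ℂ) (n+1) = (ψ : ℤ → ℂ) (n + -m + 1) := by
        rw [hψ', stmt16_transl_apply, show n + 1 + -m = n + -m + 1 from by ring]
      have c3 : (ψ' : ℤ → ℂ) (n-1) = (ψ : ℤ → ℂ) (n + -m - 1) := by
        rw [hψ', stmt16_transl_apply, show n - 1 + -m = n + -m - 1 from by ring]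
      rw [c1, c2, c3]
      by_cases h0 : (ψ : ℤ → ℂ) (n + -m) = 0
      · rw [h0]; ring
      · have h4 := hmatch (n + -m) h0
        have h5 : n + -m + m = n := by ring
        rw [h5] at h4
        rw [← h4]
    have hnorm1 : ‖ψ'‖ = ‖ψ‖ := stmt16_norm_translate (-m) ψ ψ' (fun n => rfl)
    have hnorm2 : ‖Ty ψ'‖ = ‖Tx ψ‖ := stmt16_norm_translate (-m) (Tx ψ) (Ty ψ') hcoord
    calc c * ‖ψ‖ = c * ‖ψ'‖ := by rw [hnorm1]
      _ ≤ ‖Ty ψ'‖ := hlowy ψ'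
      _ = ‖Tx ψ‖ := hnorm2
  -- lower bound for `Tx` on all of `ℓ2`, by density of finitely supported vectors
  have hlowx : ∀ φ : ℓ2, c * ‖φ‖ ≤ ‖Tx φ‖ := by
    intro φ
    refine le_of_forall_pos_le_add ?_
    intro ε hε
    set δ : ℝ := ε / (c + ‖Tx‖ + 1) with hδ
    have hTxn : (0:ℝ) ≤ ‖Tx‖ := norm_nonneg _
    have hδpos : 0 < δ := by rw [hδ]; positivity
    have hsum := lp.hasSum_single (E := fun _ : ℤ => ℂ) ENNReal.ofNat_ne_top φ
    have hsum' : Filter.Tendsto (fun s : Finset ℤ => ∑ i ∈ s, lp.single 2 i ((φ : ℤ → ℂ) i))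
        Filter.atTop (nhds φ) := hsum
    have h6 : ∀ᶠ (s : Finset ℤ) in Filter.atTop,
        dist (∑ i ∈ s, lp.single 2 i ((φ : ℤ → ℂ) i)) φ < δ :=
      Metric.tendsto_nhds.mp hsum' δ hδpos
    obtain ⟨s, hs⟩ := h6.exists
    set ψ : ℓ2 := ∑ i ∈ s, lp.single 2 i ((φ : ℤ → ℂ) i) with hψdef
    have hsupp : ∀ j : ℤ, j ∉ s → (ψ : ℤ → ℂ) j = 0 := by
      intro j hj
      rw [hψdef, lp.coeFn_sum, Finset.sum_apply]
      apply Finset.sum_eq_zero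
      intro i hi
      exact lp.single_apply_ne 2 i _ (by rintro rfl; exact hj hi)
    have hdist : ‖ψ - φ‖ < δ := by
      rw [← dist_eq_norm]
      exact hs
    have h7 : c * ‖ψ‖ ≤ ‖Tx ψ‖ := key s ψ hsupp
    have n1 : ‖φ‖ ≤ ‖ψ‖ + δ := by
      have h8 : ‖φ - ψ‖ < δ := by rwa [norm_sub_rev] at hdist
      have h9 : ‖φ‖ ≤ ‖ψ‖ + ‖φ - ψ‖ := by
        calc ‖φ‖ = ‖ψ + (φ - ψ)‖ := by rw [add_sub_cancel]
          _ ≤ ‖ψ‖ + ‖φ - ψ‖ := norm_add_le _ _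
      linarith
    have n2 : ‖Tx ψ‖ ≤ ‖Tx φ‖ + ‖Tx‖ * δ := by
      have h10 : ‖Tx (ψ - φ)‖ ≤ ‖Tx‖ * ‖ψ - φ‖ := Tx.le_opNorm _
      have h11 : ‖Tx‖ * ‖ψ - φ‖ ≤ ‖Tx‖ * δ :=
        mul_le_mul_of_nonneg_left hdist.le hTxn
      calc ‖Tx ψ‖ = ‖Tx φ + Tx (ψ - φ)‖ := by rw [← map_add, add_sub_cancel]
        _ ≤ ‖Tx φ‖ + ‖Tx (ψ - φ)‖ := norm_add_le _ _
        _ ≤ ‖Tx φ‖ + ‖Tx‖ * δ := by linarith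
    have hfinal : (c + ‖Tx‖) * δ ≤ ε := by
      have hne : c + ‖Tx‖ + 1 ≠ 0 := by positivity
      have h12 : (c + ‖Tx‖ + 1) * δ = ε := by
        rw [hδ, mul_comm, div_mul_cancel₀ ε hne]
      nlinarith
    nlinarith [mul_le_mul_of_nonneg_left n1 hcpos.le]
  -- `Tx` is injective with closed range
  have hker : LinearMap.ker (Tx : ℓ2 →ₗ[ℂ] ℓ2) = ⊥ := by
    rw [LinearMap.ker_eq_bot']
    intro φ hφ
    have h1 := hlowx φ
    rw [show Tx φ = 0 from hφ, norm_zero] at h1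
    have h2 : ‖φ‖ ≤ 0 := by nlinarith
    exact norm_le_zero_iff.mp h2
  have hanti : AntilipschitzWith (⟨c, hcpos.le⟩ : ℝ≥0)⁻¹ Tx := by
    apply Tx.antilipschitz_of_bound
    intro φ
    have h1 : (((⟨c, hcpos.le⟩ : ℝ≥0)⁻¹ : ℝ≥0) : ℝ) = c⁻¹ := by
      exact NNReal.coe_inv _
    rw [h1, ← div_eq_inv_mul, le_div_iff₀ hcpos]
    have := hlowx φ
    linarith [hlowx φ, mul_comm c ‖φ‖]
  have hclosed : IsClosed (Set.range Tx) :=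
    hanti.isClosed_range Tx.uniformContinuous
  -- symmetry of `Hx`
  have hsymm := stmt16_schrodinger_symm (fun n => f (shiftBy n x)) Hx hHx
  -- `Tx` is surjective
  have hrange : LinearMap.range (Tx : ℓ2 →ₗ[ℂ] ℓ2) = ⊤ := by
    have hRc : IsClosed ((LinearMap.range (Tx : ℓ2 →ₗ[ℂ] ℓ2) : Submodule ℂ ℓ2) : Set ℓ2) := by
      rw [LinearMap.coe_range]
      exact hclosed
    haveI : CompleteSpace (LinearMap.range (Tx : ℓ2 →ₗ[ℂ] ℓ2) : Submodule ℂ ℓ2) := hRc.completeSpace_coe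
    rw [← Submodule.orthogonal_eq_bot_iff, Submodule.eq_bot_iff]
    intro φ hφ
    have horth : ∀ ψ : ℓ2, (inner ℂ (Tx ψ) φ : ℂ) = 0 := fun ψ =>
      (Submodule.mem_orthogonal _ φ).mp hφ (Tx ψ) (LinearMap.mem_range_self _ ψ)
    have hw : ∀ ψ : ℓ2, (inner ℂ ψ ((starRingEnd ℂ) lam • φ - Hx φ) : ℂ) = 0 := by
      intro ψ
      have h1 : (inner ℂ (Tx ψ) φ : ℂ)
          = (starRingEnd ℂ) lam * (inner ℂ ψ φ : ℂ) - (inner ℂ (Hx ψ) φ : ℂ) := by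
        rw [hTxapp ψ, inner_sub_left, inner_smul_left]
      rw [inner_sub_right, inner_smul_right, ← hsymm ψ φ, ← h1, horth]
    have hw0 : (starRingEnd ℂ) lam • φ - Hx φ = 0 :=
      inner_self_eq_zero.mp (hw ((starRingEnd ℂ) lam • φ - Hx φ))
    by_cases him : lam.im = 0
    · have hcl : (starRingEnd ℂ) lam = lam := Complex.conj_eq_iff_im.mpr him
      have hTxφ : Tx φ = 0 := by
        rw [hTxapp φ, ← hcl]
        exact hw0
      have h1 := hlowx φ
      rw [hTxφ, norm_zero] at h1
      have h2 : ‖φ‖ ≤ 0 := by nlinarith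
      exact norm_le_zero_iff.mp h2
    · by_contra hφ0
      have hHφ : Hx φ = (starRingEnd ℂ) lam • φ := (sub_eq_zero.mp hw0).symm
      have h1 : (inner ℂ φ (Hx φ) : ℂ) = (starRingEnd ℂ) lam * (inner ℂ φ φ : ℂ) := by
        rw [hHφ, inner_smul_right]
      have h3 : (starRingEnd ℂ) ((inner ℂ φ (Hx φ) : ℂ)) = (inner ℂ φ (Hx φ) : ℂ) := by
        rw [inner_conj_symm]
        exact hsymm φ φ
      rw [h1, map_mul, Complex.conj_conj, inner_conj_symm] at h3
      have h4 : (inner ℂ φ φ : ℂ) ≠ 0 := by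
        rwa [Ne, inner_self_eq_zero]
      have h6 : lam = (starRingEnd ℂ) lam := mul_right_cancel₀ h4 h3
      have h7 : lam.im = -lam.im := by
        conv_lhs => rw [h6]
        exact Complex.conj_im lam
      have : lam.im = 0 := by linarith
      exact him this
  -- `Tx` is invertible, contradiction
  set e : ℓ2 ≃L[ℂ] ℓ2 := ContinuousLinearEquiv.ofBijective Tx hker hrange with he
  have hUx : IsUnit (algebraMap ℂ (ℓ2 →L[ℂ] ℓ2) lam - Hx) := by
    rw [← hTx]
    refine ⟨⟨Tx, (e.symm : ℓ2 →L[ℂ] ℓ2), ?_, ?_⟩, rfl⟩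
    · refine ContinuousLinearMap.ext fun φ => ?_
      show Tx ((e.symm : ℓ2 →L[ℂ] ℓ2) φ) = φ
      have h1 : Tx ((e.symm : ℓ2 →L[ℂ] ℓ2) φ) = e (e.symm φ) := by
        rw [he]; rfl
      rw [h1]
      exact e.apply_symm_apply φ
    · refine ContinuousLinearMap.ext fun φ => ?_
      show (e.symm : ℓ2 →L[ℂ] ℓ2) (Tx φ) = φ
      have h1 : (e.symm : ℓ2 →L[ℂ] ℓ2) (Tx φ) = e.symm (e φ) := by
        rw [he]; rfl
      rw [h1]
      exact e.symm_apply_apply φ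
  exact (spectrum.notMem_iff.mpr hUx) hlam

/-- on a minimal subshift, the Schrödinger operators generated by a
locally constant sampling function have `x`-independent spectrum. -/
theorem stmt16 {A : Type*} [Fintype A] [TopologicalSpace A] [DiscreteTopology A]
    (X : Set (ℤ → A)) (hXne : X.Nonempty) (hXclosed : IsClosed X)
    (hXinv : ∀ x ∈ X, ∀ m : ℤ, shiftBy m x ∈ X)
    (hmin : ∀ x ∈ X, closure {y | ∃ m : ℤ, y = shiftBy m x} = X)
    (f : (ℤ → A) → ℝ)
    (hf : ∃ N : ℕ, ∀ x ∈ X, ∀ y ∈ X,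
      (∀ k : ℤ, |k| ≤ (N : ℤ) → x k = y k) → f x = f y)
    (x y : ℤ → A) (hx : x ∈ X) (hy : y ∈ X)
    (Hx Hy : lp (fun _ : ℤ => ℂ) 2 →L[ℂ] lp (fun _ : ℤ => ℂ) 2)
    (hHx : ∀ ψ : lp (fun _ : ℤ => ℂ) 2, ∀ n : ℤ,
      (Hx ψ : ∀ _ : ℤ, ℂ) n =
        (ψ : ∀ _ : ℤ, ℂ) (n + 1) + (ψ : ∀ _ : ℤ, ℂ) (n - 1) +
          (f (shiftBy n x) : ℂ) * (ψ : ∀ _ : ℤ, ℂ) n)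
    (hHy : ∀ ψ : lp (fun _ : ℤ => ℂ) 2, ∀ n : ℤ,
      (Hy ψ : ∀ _ : ℤ, ℂ) n =
        (ψ : ∀ _ : ℤ, ℂ) (n + 1) + (ψ : ∀ _ : ℤ, ℂ) (n - 1) +
          (f (shiftBy n y) : ℂ) * (ψ : ∀ _ : ℤ, ℂ) n) :
    spectrum ℂ Hx = spectrum ℂ Hy := by
  exact Set.Subset.antisymm
    (stmt16_spec_subset X hXinv hmin f hf x y hx hy Hx Hy hHx hHy)
    (stmt16_spec_subset X hXinv hmin f hf y x hy hx Hy Hx hHy hHx)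

end Stmt16Aux
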